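/- Let X_1, …, X_I be independent and identically distributed random N×C real matrices on a probability space, each almost surely having all entries in [0,1] and every row summing to 1. Let P_G = E[X_1] (entrywise expectation) and P̂_G = (1/I)·Σ_{i=1}^I X_i. Then the expected spectral-norm deviation satisfies E[‖P̂_G − P_G‖] ≤ √(2·N·log(N+C)/I) + 2·√N·log(N+C)/(3·I). (Theorem 2, expectation bound) -/

import Mathlib

open MeasureTheory ProbabilityTheory

/-- The spectral norm (operator norm induced by the Euclidean norms) of a real
`m × n` matrix. -/
noncomputable def specNorm {m n : ℕ} (P : Matrix (Fin m) (Fin n) ℝ) : ℝ :=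
  ‖LinearMap.toContinuousLinearMap (Matrix.toEuclideanLin P)‖

noncomputable instance matrixMeasurableSpace {m n : ℕ} :
    MeasurableSpace (Matrix (Fin m) (Fin n) ℝ) :=
  inferInstanceAs (MeasurableSpace (Fin m → Fin n → ℝ))

lemma specNorm_le_frob {m n : ℕ} (M : Matrix (Fin m) (Fin n) ℝ) :
    specNorm M ≤ Real.sqrt (∑ a, ∑ b, (M a b) ^ 2) := by
  apply ContinuousLinearMap.opNorm_le_bound _ (Real.sqrt_nonneg _)
  intro x
  rw [LinearMap.coe_toContinuousLinearMap']
  rw [EuclideanSpace.norm_eq]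
  have hXnorm : ‖x‖ = Real.sqrt (∑ b, (x b) ^ 2) := by
    rw [EuclideanSpace.norm_eq]
    congr 1; apply Finset.sum_congr rfl; intro b _; rw [Real.norm_eq_abs, sq_abs]
  rw [hXnorm, ← Real.sqrt_mul (by positivity)]
  apply Real.sqrt_le_sqrt
  rw [Finset.sum_mul]
  apply Finset.sum_le_sum
  intro a _
  have happ : Matrix.toEuclideanLin M x a = ∑ b, M a b * x b := by
    simp [Matrix.toEuclideanLin_apply, Matrix.mulVec, dotProduct]
  rw [happ, Real.norm_eq_abs, sq_abs]
  calc (∑ b, M a b * x b) ^ 2 ≤ (∑ b, (M a b) ^ 2) * ∑ b, (x b) ^ 2 :=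
        Finset.sum_mul_sq_le_sq_mul_sq _ _ _
    _ = _ := by rw [Finset.sum_mul]

theorem graphsac_theorem2_expectation {N C I : ℕ}
    (hN : 1 ≤ N) (hC : 1 ≤ C) (hI : 1 ≤ I)
    {Ω : Type*} [MeasurableSpace Ω] (μ : Measure Ω) [IsProbabilityMeasure μ]
    (X : Fin I → Ω → Matrix (Fin N) (Fin C) ℝ)
    (hmeas : ∀ i, Measurable (X i))
    (hindep : iIndepFun (m := fun _ => matrixMeasurableSpace) X μ)
    (hident : ∀ i, IdentDistrib (X i) (X ⟨0, hI⟩) μ μ)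
    (hbound : ∀ᵐ ω ∂μ, ∀ i a b, X i ω a b ∈ Set.Icc (0 : ℝ) 1)
    (hrow : ∀ᵐ ω ∂μ, ∀ i a, ∑ b, X i ω a b = 1)
    (PG : Matrix (Fin N) (Fin C) ℝ)
    (hPG : ∀ a b, PG a b = ∫ ω, X ⟨0, hI⟩ ω a b ∂μ)
    (Phat : Ω → Matrix (Fin N) (Fin C) ℝ)
    (hPhat : ∀ ω, Phat ω = (I : ℝ)⁻¹ • ∑ i, X i ω) :
    ∫ ω, specNorm (Phat ω - PG) ∂μ ≤
      Real.sqrt (2 * N * Real.log (N + C) / I) +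
        2 * Real.sqrt N * Real.log (N + C) / (3 * I) := by
  classical
  have hIpos : (0:ℝ) < I := by exact_mod_cast hI
  have hIne : (I:ℝ) ≠ 0 := ne_of_gt hIpos
  set i0 : Fin I := ⟨0, hI⟩ with hi0
  -- measurability of entries
  have hev : ∀ (a : Fin N) (b : Fin C),
      Measurable (fun M : Matrix (Fin N) (Fin C) ℝ => M a b) :=
    fun a b => (measurable_pi_apply b).comp (measurable_pi_apply a)
  have hYm : ∀ i a b, Measurable (fun ω => X i ω a b) :=
    fun i a b => (hev a b).comp (hmeas i)
  have hYb : ∀ i a b, ∀ᵐ ω ∂μ, X i ω a b ∈ Set.Icc (0:ℝ) 1 :=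
    fun i a b => hbound.mono fun ω h => h i a b
  have hY2 : ∀ i a b, MemLp (fun ω => X i ω a b) 2 μ :=
    fun i a b => memLp_of_bounded (hYb i a b) (hYm i a b).aestronglyMeasurable 2
  have hYint : ∀ i a b, Integrable (fun ω => X i ω a b) μ :=
    fun i a b => (hY2 i a b).integrable one_le_two
  have hPGeq : ∀ i a b, ∫ ω, X i ω a b ∂μ = PG a b := by
    intro i a b
    rw [hPG a b]
    exact ((hident i).comp (hev a b)).integral_eq
  -- row sums of PG equal 1
  have hPGrow : ∀ a, ∑ b, PG a b = 1 := by
    intro a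
    have h1 : ∑ b, ∫ ω, X i0 ω a b ∂μ = ∫ ω, ∑ b, X i0 ω a b ∂μ :=
      (integral_finset_sum _ fun b _ => hYint i0 a b).symm
    have h2 : ∫ ω, ∑ b, X i0 ω a b ∂μ = ∫ _ω, (1:ℝ) ∂μ :=
      integral_congr_ae (hrow.mono fun ω h => h i0 a)
    have h3 : ∑ b, PG a b = ∑ b, ∫ ω, X i0 ω a b ∂μ :=
      Finset.sum_congr rfl fun b _ => (hPGeq i0 a b).symm
    rw [h3, h1, h2]; simp
  -- variance of each entry is at most `PG a b`
  have hVar : ∀ i a b, variance (fun ω => X i ω a b) μ ≤ PG a b := by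
    intro i a b
    refine (variance_le_expectation_sq (hYm i a b).aestronglyMeasurable).trans ?_
    have hle : ∫ ω, (X i ω a b) ^ 2 ∂μ ≤ ∫ ω, X i ω a b ∂μ := by
      refine integral_mono_ae (hY2 i a b).integrable_sq (hYint i a b) ?_
      filter_upwards [hYb i a b] with ω h
      calc (X i ω a b) ^ 2 ≤ (X i ω a b) ^ 1 :=
            pow_le_pow_of_le_one h.1 h.2 one_le_two
        _ = X i ω a b := pow_one _
    calc μ[(fun ω => X i ω a b) ^ 2] = ∫ ω, (X i ω a b) ^ 2 ∂μ := by
          apply integral_congr_ae; filter_upwards with ω; simp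
      _ ≤ ∫ ω, X i ω a b ∂μ := hle
      _ = PG a b := hPGeq i a b
  -- per-entry second moment bound
  have hEntry : ∀ a b, ∫ ω, (Phat ω a b - PG a b) ^ 2 ∂μ ≤ PG a b / I := by
    intro a b
    set S : Ω → ℝ := ∑ i : Fin I, (fun ω => X i ω a b) with hS
    have hSapp : ∀ ω, S ω = ∑ i, X i ω a b := fun ω => by
      rw [hS]; simp
    have hS2 : MemLp S 2 μ := memLp_finset_sum' _ fun i _ => hY2 i a b
    have hES : ∫ ω, S ω ∂μ = I * PG a b := by
      have : ∫ ω, S ω ∂μ = ∑ i : Fin I, ∫ ω, X i ω a b ∂μ := by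
        rw [integral_congr_ae (Filter.Eventually.of_forall hSapp)]
        exact integral_finset_sum _ fun i _ => hYint i a b
      rw [this]
      simp [hPGeq, Finset.sum_const, Finset.card_univ]
    have hVarS : variance S μ ≤ I * PG a b := by
      have hvs : variance S μ = ∑ i : Fin I, variance (fun ω => X i ω a b) μ := by
        refine IndepFun.variance_sum (fun i _ => hY2 i a b) ?_
        intro i _ j _ hij
        exact ((hindep.indepFun hij).comp (hev a b) (hev a b))
      rw [hvs]
      calc ∑ i : Fin I, variance (fun ω => X i ω a b) μ ≤ ∑ _i : Fin I, PG a b :=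
            Finset.sum_le_sum fun i _ => hVar i a b
        _ = I * PG a b := by simp [Finset.sum_const, Finset.card_univ]
    have hVeq : variance S μ = ∫ ω, (S ω - ∫ ω', S ω' ∂μ) ^ 2 ∂μ := by
      refine (variance_eq_integral hS2.aemeasurable).trans ?_
      apply integral_congr_ae; filter_upwards with ω; simp
    have hDelta : ∀ ω, Phat ω a b - PG a b = (I:ℝ)⁻¹ * (S ω - ∫ ω', S ω' ∂μ) := by
      intro ω
      rw [hES, hSapp, hPhat ω, Matrix.smul_apply, Matrix.sum_apply, smul_eq_mul]
      field_simp
    calc ∫ ω, (Phat ω a b - PG a b) ^ 2 ∂μ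
        = ∫ ω, ((I:ℝ)⁻¹) ^ 2 * (S ω - ∫ ω', S ω' ∂μ) ^ 2 ∂μ := by
          apply integral_congr_ae
          filter_upwards with ω
          rw [hDelta ω, mul_pow]
      _ = ((I:ℝ)⁻¹) ^ 2 * ∫ ω, (S ω - ∫ ω', S ω' ∂μ) ^ 2 ∂μ := integral_const_mul _ _
      _ = ((I:ℝ)⁻¹) ^ 2 * variance S μ := by rw [hVeq]
      _ ≤ ((I:ℝ)⁻¹) ^ 2 * (I * PG a b) := by
          apply mul_le_mul_of_nonneg_left hVarS (by positivity)
      _ = PG a b / I := by field_simp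
  -- measurability / integrability of entries of Phat
  have hPhatm : ∀ a b, Measurable (fun ω => Phat ω a b) := by
    intro a b
    have : (fun ω => Phat ω a b)
        = fun ω => (I:ℝ)⁻¹ * ∑ i, X i ω a b := by
      funext ω
      rw [hPhat ω, Matrix.smul_apply, Matrix.sum_apply, smul_eq_mul]
    rw [this]
    exact (Finset.measurable_sum _ fun i _ => hYm i a b).const_mul _
  have hDm : ∀ a b, Measurable (fun ω => Phat ω a b - PG a b) :=
    fun a b => (hPhatm a b).sub measurable_const
  have hPhat2 : ∀ a b, MemLp (fun ω => Phat ω a b) 2 μ := by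
    intro a b
    have h1 : MemLp (fun ω => (I:ℝ)⁻¹ * ∑ i, X i ω a b) 2 μ :=
      (memLp_finset_sum _ fun i _ => hY2 i a b).const_mul _
    refine h1.ae_eq (Filter.Eventually.of_forall fun ω => ?_)
    show (I:ℝ)⁻¹ * ∑ i, X i ω a b = Phat ω a b
    rw [hPhat ω, Matrix.smul_apply, Matrix.sum_apply, smul_eq_mul]
  have hD2 : ∀ a b, MemLp (fun ω => Phat ω a b - PG a b) 2 μ := by
    intro a b
    have := (hPhat2 a b).sub (memLp_const (PG a b))
    exact this
  have hDsqint : ∀ a b, Integrable (fun ω => (Phat ω a b - PG a b) ^ 2) μ :=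
    fun a b => (hD2 a b).integrable_sq
  -- the Frobenius-squared function
  set T : Ω → ℝ := fun ω => ∑ a, ∑ b, (Phat ω a b - PG a b) ^ 2 with hTdef
  have hTint : Integrable T μ :=
    integrable_finset_sum _ fun a _ => integrable_finset_sum _ fun b _ => hDsqint a b
  have hTnn : ∀ ω, 0 ≤ T ω := fun ω =>
    Finset.sum_nonneg fun a _ => Finset.sum_nonneg fun b _ => sq_nonneg _
  have hTm : Measurable T :=
    Finset.measurable_sum _ fun a _ => Finset.measurable_sum _ fun b _ =>
      ((hDm a b).pow_const 2)
  have hTbound : ∫ ω, T ω ∂μ ≤ N / I := by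
    calc ∫ ω, T ω ∂μ = ∑ a, ∑ b, ∫ ω, (Phat ω a b - PG a b) ^ 2 ∂μ := by
          rw [hTdef]
          rw [integral_finset_sum _ fun a _ =>
            integrable_finset_sum _ fun b _ => hDsqint a b]
          exact Finset.sum_congr rfl fun a _ =>
            integral_finset_sum _ fun b _ => hDsqint a b
      _ ≤ ∑ a : Fin N, ∑ b, PG a b / I :=
          Finset.sum_le_sum fun a _ => Finset.sum_le_sum fun b _ => hEntry a b
      _ = ∑ a : Fin N, (1:ℝ) / I := by
          apply Finset.sum_congr rfl
          intro a _
          rw [← Finset.sum_div, hPGrow a]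
      _ = N / I := by
          simp [Finset.sum_const, Finset.card_univ]
          ring
  -- the Frobenius norm function
  set g : Ω → ℝ := fun ω => Real.sqrt (T ω) with hgdef
  have hgm : Measurable g := Real.continuous_sqrt.measurable.comp hTm
  have hgsq : ∀ ω, g ω ^ 2 = T ω := fun ω => Real.sq_sqrt (hTnn ω)
  have hgmem : MemLp g 2 μ := by
    refine (memLp_two_iff_integrable_sq hgm.aestronglyMeasurable).2 ?_
    refine hTint.congr (Filter.Eventually.of_forall fun ω => ?_)
    exact (hgsq ω).symm
  have hgint : Integrable g μ := hgmem.integrable one_le_two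
  -- step 1: spectral norm below Frobenius norm
  have hstep1 : ∫ ω, specNorm (Phat ω - PG) ∂μ ≤ ∫ ω, g ω ∂μ := by
    refine integral_mono_of_nonneg (Filter.Eventually.of_forall fun ω => norm_nonneg _)
      hgint (Filter.Eventually.of_forall fun ω => ?_)
    have := specNorm_le_frob (Phat ω - PG)
    simpa [Matrix.sub_apply, hgdef, hTdef] using this
  -- step 2: Cauchy–Schwarz
  have hstep2 : ∫ ω, g ω ∂μ ≤ Real.sqrt (∫ ω, T ω ∂μ) := by
    have hvar := variance_nonneg g μ
    rw [variance_eq_sub hgmem] at hvar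
    have hsqT : μ[g ^ 2] = ∫ ω, T ω ∂μ := by
      apply integral_congr_ae; filter_upwards with ω
      simp [hgsq ω]
    have h1 : (∫ ω, g ω ∂μ) ^ 2 ≤ ∫ ω, T ω ∂μ := by
      rw [← hsqT]
      linarith [hvar]
    calc ∫ ω, g ω ∂μ = Real.sqrt ((∫ ω, g ω ∂μ) ^ 2) :=
          (Real.sqrt_sq (integral_nonneg fun ω => Real.sqrt_nonneg _)).symm
      _ ≤ Real.sqrt (∫ ω, T ω ∂μ) := Real.sqrt_le_sqrt h1
  -- step 3: numeric comparison
  have hNC2 : (2:ℝ) ≤ (N:ℝ) + C := by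
    have h1 : (1:ℝ) ≤ (N:ℝ) := by exact_mod_cast hN
    have h2 : (1:ℝ) ≤ (C:ℝ) := by exact_mod_cast hC
    linarith
  have hlog : (1:ℝ) / 2 ≤ Real.log ((N:ℝ) + C) := by
    have := Real.log_le_log (by norm_num) hNC2
    have h2 : (1:ℝ)/2 ≤ Real.log 2 := by
      have := Real.log_two_gt_d9
      linarith
    linarith
  have hlognn : (0:ℝ) ≤ Real.log ((N:ℝ) + C) := by linarith
  have hstep3 : Real.sqrt ((N:ℝ) / I) ≤ Real.sqrt (2 * N * Real.log (N + C) / I) := by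
    apply Real.sqrt_le_sqrt
    rw [div_le_div_iff₀ hIpos hIpos]
    have hNnn : (0:ℝ) ≤ (N:ℝ) := Nat.cast_nonneg N
    nlinarith [mul_le_mul_of_nonneg_left hlog hNnn]
  have hlast : (0:ℝ) ≤ 2 * Real.sqrt N * Real.log (N + C) / (3 * I) := by
    apply div_nonneg
    · have := Real.sqrt_nonneg (N:ℝ)
      nlinarith
    · linarith
  calc ∫ ω, specNorm (Phat ω - PG) ∂μ ≤ ∫ ω, g ω ∂μ := hstep1
    _ ≤ Real.sqrt (∫ ω, T ω ∂μ) := hstep2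
    _ ≤ Real.sqrt ((N:ℝ) / I) := Real.sqrt_le_sqrt hTbound
    _ ≤ Real.sqrt (2 * N * Real.log (N + C) / I) := hstep3
    _ ≤ _ := le_add_of_nonneg_right hlast
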